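/- Let A be a commutative adjacency algebra on a countable set I and i_0 ∈ I a maximal and non-degenerate element. Then there exists a basis {b_i}_{i∈I} of A contained in the adjacency cone C(A) such that b_i e_{i_0} = e_i for all i, C(A) equals the closed cone generated by the b_i, and the products b_i b_j expand on {b_k} with nonnegative coefficients; in particular A is positively multiplicative. -/

import Mathlib

open scoped ENNReal

/-- `T` is an adjacency operator on `ℓ¹(I)`: all its matrix entries in the standard
Schauder basis are nonnegative reals. -/
def IsAdjacencyOp {I : Type*} [DecidableEq I] [Fact ((1 : ℝ≥0∞) ≤ 1)]
    (T : lp (fun _ : I => ℂ) 1 →L[ℂ] lp (fun _ : I => ℂ) 1) : Prop :=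
  ∀ i j : I, 0 ≤ ((T (lp.single 1 j 1)) i).re ∧ ((T (lp.single 1 j 1)) i).im = 0

section Aux

variable {I : Type*} [DecidableEq I]

/-- Coordinate evaluation as a continuous linear map on `ℓ¹(I)`. -/
noncomputable def evalCLM (i : I) : lp (fun _ : I => ℂ) 1 →L[ℂ] ℂ :=
  LinearMap.mkContinuous
    { toFun := fun f => f i
      map_add' := fun f g => by
        have := lp.coeFn_add f g
        simp [lp.coeFn_add]
      map_smul' := fun c f => by simp [lp.coeFn_smul] }
    1 (fun f => by
      show ‖(f : I → ℂ) i‖ ≤ 1 * ‖f‖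
      simpa using lp.norm_apply_le_norm one_ne_zero f i)

/-- Evaluation of an operator at a fixed vector, as a continuous linear map. -/
noncomputable def opEval (w : lp (fun _ : I => ℂ) 1) :
    (lp (fun _ : I => ℂ) 1 →L[ℂ] lp (fun _ : I => ℂ) 1) →L[ℂ] lp (fun _ : I => ℂ) 1 :=
  LinearMap.mkContinuous
    { toFun := fun T => T w
      map_add' := fun T S => rfl
      map_smul' := fun c T => rfl }
    ‖w‖ (fun T => by rw [mul_comm]; exact T.le_opNorm w)

@[simp] lemma opEval_apply (w : lp (fun _ : I => ℂ) 1)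
    (T : lp (fun _ : I => ℂ) 1 →L[ℂ] lp (fun _ : I => ℂ) 1) : opEval w T = T w := rfl

@[simp] lemma evalCLM_apply (i : I) (f : lp (fun _ : I => ℂ) 1) : evalCLM i f = f i := rfl

lemma nonneg_of_hasSum {J : Type*} {f : J → ℂ} {z : ℂ}
    (h : HasSum f z) (hf : ∀ j, 0 ≤ (f j).re ∧ (f j).im = 0) :
    0 ≤ z.re ∧ z.im = 0 := by
  have hre : HasSum (fun j => (f j).re) z.re := Complex.reCLM.hasSum h
  have him : HasSum (fun j => (f j).im) z.im := Complex.imCLM.hasSum h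
  constructor
  · exact hasSum_le (fun j => (hf j).1) hasSum_zero hre
  · have : (fun j => (f j).im) = fun _ => (0 : ℝ) := funext fun j => (hf j).2
    rw [this] at him
    exact (hasSum_zero.unique him).symm

lemma single_nonneg (i j : I) :
    0 ≤ ((lp.single 1 i (1 : ℂ) : lp (fun _ : I => ℂ) 1) j).re ∧
      ((lp.single 1 i (1 : ℂ) : lp (fun _ : I => ℂ) 1) j).im = 0 := by
  by_cases h : j = i
  · subst h; rw [lp.single_apply_self]; norm_num
  · rw [lp.single_apply_ne _ _ _ h]; norm_num

lemma norm_single_one (i : I) :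
    ‖(lp.single 1 i (1 : ℂ) : lp (fun _ : I => ℂ) 1)‖ = 1 := by
  have := lp.norm_single (p := 1) (E := fun _ : I => ℂ) (by norm_num) i (1 : ℂ)
  simpa using this

/-- An adjacency operator maps entrywise-nonnegative vectors to entrywise-nonnegative
vectors. -/
lemma adj_maps_nonneg [Fact ((1 : ℝ≥0∞) ≤ 1)]
    {T : lp (fun _ : I => ℂ) 1 →L[ℂ] lp (fun _ : I => ℂ) 1}
    (hT : IsAdjacencyOp T) {v : lp (fun _ : I => ℂ) 1}
    (hv : ∀ i, 0 ≤ (v i).re ∧ (v i).im = 0) (i : I) :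
    0 ≤ ((T v) i).re ∧ ((T v) i).im = 0 := by
  have h1 : HasSum (fun j : I => lp.single 1 j (v j)) v :=
    lp.hasSum_single (by norm_num) v
  have h2 : HasSum (fun j : I => T (lp.single 1 j (v j))) (T v) := T.hasSum h1
  have h3 : HasSum (fun j : I => (T (lp.single 1 j (v j))) i) ((T v) i) :=
    (evalCLM i).hasSum h2
  have key : ∀ j : I, (T (lp.single 1 j (v j))) i = v j * (T (lp.single 1 j 1)) i := by
    intro j
    have : lp.single (E := fun _ : I => ℂ) 1 j (v j) = v j • lp.single 1 j (1 : ℂ) := by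
      rw [← lp.single_smul]; simp
    rw [this, map_smul]
    simp [lp.coeFn_smul]
  rw [show (fun j : I => (T (lp.single 1 j (v j))) i)
      = fun j : I => v j * (T (lp.single 1 j 1)) i from funext key] at h3
  refine nonneg_of_hasSum h3 fun j => ?_
  obtain ⟨h4, h5⟩ := hT i j
  obtain ⟨h6, h7⟩ := hv j
  constructor
  · simp [Complex.mul_re, h5, h7]
    positivity
  · simp [Complex.mul_im, h5, h7]

end Aux

set_option maxHeartbeats 1000000 in
/-- Let `𝒜` be a (closed, commutative, generated by adjacency operators) adjacency algebra
on a countable set `I` and `i₀ ∈ I` maximal and non-degenerate. Then there is a family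
`{b i} ⊆ C(𝒜)` with `b i (e i₀) = e i`, linearly independent, such that the adjacency cone
`C(𝒜) = {T ∈ 𝒜 ∣ T adjacency}` consists exactly of the convergent sums `∑ c i • b i` with
`c i ≥ 0`, and the products `b i * b j` expand on `{b k}` with nonnegative coefficients;
in particular `𝒜` is positively multiplicative. -/
theorem maximal_nondegenerate_gives_pm_basis
    {I : Type*} [Countable I] [DecidableEq I] [Fact ((1 : ℝ≥0∞) ≤ 1)]
    (𝒜 : Subalgebra ℂ (lp (fun _ : I => ℂ) 1 →L[ℂ] lp (fun _ : I => ℂ) 1))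
    (hclosed : IsClosed (𝒜 : Set (lp (fun _ : I => ℂ) 1 →L[ℂ] lp (fun _ : I => ℂ) 1)))
    (hcomm : ∀ x ∈ 𝒜, ∀ y ∈ 𝒜, x * y = y * x)
    (hgen : ∃ S : Set (lp (fun _ : I => ℂ) 1 →L[ℂ] lp (fun _ : I => ℂ) 1),
      (∀ T ∈ S, IsAdjacencyOp T) ∧
      (𝒜 : Set (lp (fun _ : I => ℂ) 1 →L[ℂ] lp (fun _ : I => ℂ) 1)) =
        closure (Algebra.adjoin ℂ S : Set (lp (fun _ : I => ℂ) 1 →L[ℂ] lp (fun _ : I => ℂ) 1)))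
    (i₀ : I)
    (hnd : ∃ α : ℝ, 0 < α ∧ ∀ T ∈ 𝒜, α * ‖T‖ ≤ ‖T (lp.single 1 i₀ 1)‖)
    (hmax : ∀ v : lp (fun _ : I => ℂ) 1, (∀ i, 0 ≤ (v i).re ∧ (v i).im = 0) →
      ∃ T ∈ 𝒜, IsAdjacencyOp T ∧ T (lp.single 1 i₀ 1) = v) :
    ∃ b : I → (lp (fun _ : I => ℂ) 1 →L[ℂ] lp (fun _ : I => ℂ) 1),
      (∀ i, b i ∈ 𝒜 ∧ IsAdjacencyOp (b i)) ∧
      (∀ i, b i (lp.single 1 i₀ 1) = lp.single 1 i 1) ∧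
      LinearIndependent ℂ b ∧
      (∀ T, (T ∈ 𝒜 ∧ IsAdjacencyOp T) ↔
        ∃ c : I → ℝ, (∀ i, 0 ≤ c i) ∧ HasSum (fun i => (c i : ℂ) • b i) T) ∧
      (∀ i j, ∃ c : I → ℝ, (∀ k, 0 ≤ c k) ∧
        HasSum (fun k => (c k : ℂ) • b k) (b i * b j)) := by
  classical
  obtain ⟨α, hα, hco⟩ := hnd
  set e₀ : lp (fun _ : I => ℂ) 1 := lp.single 1 i₀ 1 with he₀
  -- injectivity of evaluation at e₀ on 𝒜
  have hinj : ∀ T ∈ 𝒜, ∀ S ∈ 𝒜, T e₀ = S e₀ → T = S := by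
    intro T hT S hS h
    have hTS : T - S ∈ 𝒜 := by
      have := 𝒜.toSubmodule.sub_mem hT hS
      simpa using this
    have := hco (T - S) hTS
    rw [show (T - S) e₀ = T e₀ - S e₀ from rfl, h, sub_self, norm_zero] at this
    have hns : ‖T - S‖ ≤ 0 := by nlinarith [norm_nonneg (T - S)]
    have hz : T - S = 0 := by
      rw [← norm_le_zero_iff]; exact hns
    exact sub_eq_zero.mp hz
  -- choose the basis elements
  have hsingle_nonneg : ∀ i : I, ∀ j : I,
      0 ≤ ((lp.single 1 i (1:ℂ) : lp (fun _ : I => ℂ) 1) j).re ∧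
        ((lp.single 1 i (1:ℂ) : lp (fun _ : I => ℂ) 1) j).im = 0 :=
    fun i j => single_nonneg i j
  choose b hb𝒜 hbadj hbe using fun i : I => hmax (lp.single 1 i 1) (hsingle_nonneg i)
  have hbnorm : ∀ i, ‖b i‖ ≤ 1 / α := by
    intro i
    have h1 := hco (b i) (hb𝒜 i)
    rw [hbe i, norm_single_one] at h1
    rw [le_div_iff₀ hα]
    linarith
  -- the key summability construction
  have key : ∀ v : lp (fun _ : I => ℂ) 1, (∀ i, 0 ≤ (v i).re ∧ (v i).im = 0) →
      ∃ S : lp (fun _ : I => ℂ) 1 →L[ℂ] lp (fun _ : I => ℂ) 1, S ∈ 𝒜 ∧ S e₀ = v ∧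
        HasSum (fun i => (((v i).re : ℂ)) • b i) S := by
    intro v hv
    set c : I → ℝ := fun i => (v i).re with hc
    have hvc : ∀ i, v i = (c i : ℂ) := fun i => Complex.ext rfl (hv i).2
    have hsumnorm : Summable (fun i => ‖v i‖) := by
      have := (memℓp_gen_iff (p := 1) (by norm_num)).mp (lp.memℓp v)
      simpa using this
    have hsc : Summable c :=
      Summable.of_nonneg_of_le (fun i => (hv i).1)
        (fun i => by rw [hvc i, Complex.norm_real]; exact le_abs_self _) hsumnorm
    have hsummand : Summable (fun i => ((c i : ℂ)) • b i) := by
      refine Summable.of_norm (Summable.of_nonneg_of_le (fun i => norm_nonneg _)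
        (fun i => ?_) (hsc.mul_right (1 / α)))
      rw [norm_smul (c i : ℂ) (b i), Complex.norm_real, Real.norm_eq_abs,
        abs_of_nonneg (hv i).1]
      exact mul_le_mul_of_nonneg_left (hbnorm i) (hv i).1
    obtain ⟨S, hhs⟩ := hsummand
    have hSmem : S ∈ 𝒜 := by
      refine hclosed.mem_of_tendsto hhs (Filter.Eventually.of_forall fun s => ?_)
      exact Submodule.sum_mem 𝒜.toSubmodule
        (fun i _ => Submodule.smul_mem _ _ (hb𝒜 i))
    have hSe : S e₀ = v := by
      have h2 : HasSum (fun i => opEval e₀ (((c i : ℂ)) • b i)) (S e₀) :=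
        (opEval e₀).hasSum hhs
      have h3 : HasSum (fun i => ((c i : ℂ)) • (lp.single 1 i (1:ℂ) : lp (fun _ : I => ℂ) 1)) (S e₀) := by
        have heq : (fun i => opEval e₀ (((c i : ℂ)) • b i))
            = fun i => ((c i : ℂ)) • (lp.single 1 i (1:ℂ) : lp (fun _ : I => ℂ) 1) := by
          funext i
          rw [opEval_apply, ContinuousLinearMap.smul_apply, hbe i]
        rw [← heq]
        exact h2
      have h4 : HasSum (fun i : I => (lp.single 1 i (v i) : lp (fun _ : I => ℂ) 1)) v :=
        lp.hasSum_single (by norm_num) v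
      have h5 : (fun i : I => (lp.single 1 i (v i) : lp (fun _ : I => ℂ) 1))
          = fun i => ((c i : ℂ)) • (lp.single 1 i (1:ℂ) : lp (fun _ : I => ℂ) 1) := by
        funext i
        rw [← lp.single_smul, hvc i]
        simp
      rw [h5] at h4
      exact h3.unique h4
    exact ⟨S, hSmem, hSe, hhs⟩
  -- adjacency of nonnegative sums
  have hadj_sum : ∀ (c : I → ℝ) (T : lp (fun _ : I => ℂ) 1 →L[ℂ] lp (fun _ : I => ℂ) 1), (∀ i, 0 ≤ c i) →
      HasSum (fun i => (c i : ℂ) • b i) T → T ∈ 𝒜 ∧ IsAdjacencyOp T := by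
    intro c T hc hhs
    constructor
    · refine hclosed.mem_of_tendsto hhs (Filter.Eventually.of_forall fun s => ?_)
      exact Submodule.sum_mem 𝒜.toSubmodule
        (fun i _ => Submodule.smul_mem _ _ (hb𝒜 i))
    · intro i j
      have h2 : HasSum (fun k => opEval (lp.single 1 j 1) ((c k : ℂ) • b k))
          (T (lp.single 1 j 1)) :=
        (opEval (lp.single 1 j 1)).hasSum hhs
      have h3 : HasSum (fun k => evalCLM i (opEval (lp.single 1 j 1) ((c k : ℂ) • b k)))
          ((T (lp.single 1 j 1)) i) := (evalCLM i).hasSum h2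
      have h4 : HasSum (fun k => (c k : ℂ) * ((b k (lp.single 1 j 1)) i))
          ((T (lp.single 1 j 1)) i) := by
        have heq : (fun k => evalCLM i (opEval (lp.single 1 j 1) ((c k : ℂ) • b k)))
            = fun k => (c k : ℂ) * ((b k (lp.single 1 j 1)) i) := by
          funext k
          rw [opEval_apply, ContinuousLinearMap.smul_apply, evalCLM_apply]
          rw [lp.coeFn_smul]; rfl
        rw [← heq]
        exact h3
      refine nonneg_of_hasSum h4 fun k => ?_
      obtain ⟨h5, h6⟩ := hbadj k i j
      constructor
      · simp only [Complex.mul_re, Complex.ofReal_re, Complex.ofReal_im, zero_mul, sub_zero]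
        exact mul_nonneg (hc k) h5
      · simp [Complex.mul_im, h6]
  -- linear independence
  have hli : LinearIndependent ℂ b := by
    have hsli : LinearIndependent ℂ (fun i : I => (lp.single 1 i (1:ℂ) : lp (fun _ : I => ℂ) 1)) := by
      rw [linearIndependent_iff']
      intro s g hsum i hi
      have h1 := congrArg (evalCLM i) hsum
      rw [map_sum, map_zero] at h1
      have h2 : ∀ j ∈ s, evalCLM i ((g j) • (lp.single 1 j (1:ℂ) : lp (fun _ : I => ℂ) 1))
          = if i = j then g j else 0 := by
        intro j _
        by_cases h : i = j
        · subst h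
          simp [lp.coeFn_smul, lp.single_apply_self]
        · simp [lp.coeFn_smul, lp.single_apply_ne _ _ _ h, h]
      rw [Finset.sum_congr rfl h2, Finset.sum_ite_eq s i g] at h1
      simpa [hi] using h1
    exact LinearIndependent.of_comp (opEval e₀).toLinearMap
      (by rw [show (opEval e₀).toLinearMap ∘ b
          = fun i : I => (lp.single 1 i (1:ℂ) : lp (fun _ : I => ℂ) 1) from
            funext fun i => by simpa using hbe i]
          exact hsli)
  -- the cone characterization
  have hchar : ∀ T : lp (fun _ : I => ℂ) 1 →L[ℂ] lp (fun _ : I => ℂ) 1, (T ∈ 𝒜 ∧ IsAdjacencyOp T) ↔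
      ∃ c : I → ℝ, (∀ i, 0 ≤ c i) ∧ HasSum (fun i => (c i : ℂ) • b i) T := by
    intro T
    constructor
    · rintro ⟨hT𝒜, hTadj⟩
      have hv : ∀ i, 0 ≤ ((T e₀) i).re ∧ ((T e₀) i).im = 0 := fun i => hTadj i i₀
      obtain ⟨S, hSmem, hSe, hhs⟩ := key (T e₀) hv
      have : S = T := hinj S hSmem T hT𝒜 (by rw [hSe])
      exact ⟨fun i => ((T e₀) i).re, fun i => (hv i).1, this ▸ hhs⟩
    · rintro ⟨c, hc, hhs⟩
      exact hadj_sum c T hc hhs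
  refine ⟨b, fun i => ⟨hb𝒜 i, hbadj i⟩, hbe, hli, hchar, ?_⟩
  -- products
  intro i j
  have hmem : b i * b j ∈ 𝒜 := mul_mem (hb𝒜 i) (hb𝒜 j)
  have hadj : IsAdjacencyOp (b i * b j) := by
    intro k l
    have h1 : (b i * b j) (lp.single 1 l 1) = b i (b j (lp.single 1 l 1)) := rfl
    rw [h1]
    exact adj_maps_nonneg (hbadj i) (fun m => hbadj j m l) k
  exact (hchar (b i * b j)).mp ⟨hmem, hadj⟩
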